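/- Fix N ∈ ℕ, σ > 0, T > 0 and C₁ > 0. Let u : ℝ → (ℕ → ℂ) with u(t,k) = 0 for all k > N, each t ↦ u(t,k) differentiable, satisfying the Galerkin system: for 0 ≤ k ≤ N, i·(d/dt)u(t,k) = ∑ u(t,n)·conj(u(t,j))·u(t,m), summed over (n,j,m) with 0 ≤ n,j,m ≤ N and n + m = j + k. Assume ∑_{k=0}^{N} |u(t,k)| ≤ C₁ for all t ∈ [0,T]. Set G₀ := ∑_{k=0}^{N} e^{σk}|u(0,k)|, C₀ := max{G₀, ((1+√5)/2)·e·C₁} and λ := 4·C₀·C₁. Then for every t ∈ [0,T], ∑_{k=0}^{N} e^{σ·e^{−λt}·k}·|u(t,k)| ≤ C₀. -/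

import Mathlib

open scoped BigOperators

/-- The cubic nonlinearity of the Galerkin-truncated Szegő equation on the Fourier side:
for frequency `k`, the sum of `u(t,n) * conj (u(t,j)) * u(t,m)` over all triples
`(n,j,m)` with `0 ≤ n,j,m ≤ N` and `n + m = j + k`. -/
noncomputable def galerkinCubic (N : ℕ) (u : ℝ → ℕ → ℂ) (t : ℝ) (k : ℕ) : ℂ :=
  ∑ p ∈ (Finset.range (N + 1) ×ˢ Finset.range (N + 1) ×ˢ Finset.range (N + 1)).filter
      (fun p => p.1 + p.2.2 = p.2.1 + k),
    u t p.1 * (starRingEnd ℂ) (u t p.2.1) * u t p.2.2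

/-- `u : ℝ → (ℕ → ℂ)` is a solution of the `N`-th Galerkin approximation
`i ∂ₜ u_N = P_N(|u_N|² u_N)` of the cubic Szegő equation: the Fourier coefficients
vanish for `k > N`, and for `0 ≤ k ≤ N` the map `t ↦ u(t,k)` is differentiable with
`i u'(t,k) = ∑_{0 ≤ n,j,m ≤ N, n+m=j+k} u(t,n) conj(u(t,j)) u(t,m)`. -/
def IsGalerkinSolution (N : ℕ) (u : ℝ → ℕ → ℂ) : Prop :=
  (∀ t : ℝ, ∀ k : ℕ, N < k → u t k = 0) ∧
  ∀ t : ℝ, ∀ k : ℕ, k ≤ N →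
    HasDerivAt (fun s : ℝ => u s k) (-Complex.I * galerkinCubic N u t k) t

lemma my_exp_le (x : ℝ) (hx : 0 ≤ x) : Real.exp x ≤ Real.exp 1 + x * Real.exp x := by
  rcases le_total x 1 with h | h
  · have := Real.exp_le_exp.2 h
    nlinarith [Real.exp_pos x]
  · nlinarith [Real.exp_pos x, Real.exp_pos 1]

lemma my_cubic_bound (N : ℕ) {c : ℝ} (hc : 0 ≤ c) (u : ℝ → ℕ → ℂ) (x : ℝ) :
    ∑ k ∈ Finset.range (N + 1), Real.exp (c * k) * ‖galerkinCubic N u x k‖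
    ≤ (∑ n ∈ Finset.range (N + 1), Real.exp (c * n) * ‖u x n‖) *
      (∑ j ∈ Finset.range (N + 1), ‖u x j‖) *
      (∑ m ∈ Finset.range (N + 1), Real.exp (c * m) * ‖u x m‖) := by
  classical
  set v : ℕ → ℂ := u x with hv
  set A := Finset.range (N + 1) with hA
  set box := A ×ˢ A ×ˢ A with hbox
  set g : ℕ × ℕ × ℕ → ℝ :=
    fun p => (Real.exp (c * p.1) * ‖v p.1‖) * ‖v p.2.1‖ * (Real.exp (c * p.2.2) * ‖v p.2.2‖)
    with hg
  have hgnonneg : ∀ p, 0 ≤ g p := by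
    intro p
    positivity
  have step1 : ∀ k ∈ A, Real.exp (c * k) * ‖galerkinCubic N u x k‖
      ≤ ∑ p ∈ box.filter (fun p => p.1 + p.2.2 = p.2.1 + k), g p := by
    intro k _
    calc Real.exp (c * k) * ‖galerkinCubic N u x k‖
        ≤ Real.exp (c * k) * ∑ p ∈ box.filter (fun p => p.1 + p.2.2 = p.2.1 + k),
            ‖v p.1 * (starRingEnd ℂ) (v p.2.1) * v p.2.2‖ := by
          have := norm_sum_le (box.filter (fun p => p.1 + p.2.2 = p.2.1 + k))
            (fun p => v p.1 * (starRingEnd ℂ) (v p.2.1) * v p.2.2)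
          exact mul_le_mul_of_nonneg_left this (Real.exp_pos _).le
      _ = ∑ p ∈ box.filter (fun p => p.1 + p.2.2 = p.2.1 + k),
            Real.exp (c * k) * (‖v p.1‖ * ‖v p.2.1‖ * ‖v p.2.2‖) := by
          rw [Finset.mul_sum]
          refine Finset.sum_congr rfl ?_
          intro p _
          rw [norm_mul, norm_mul, RingHomIsometric.norm_map]
      _ ≤ ∑ p ∈ box.filter (fun p => p.1 + p.2.2 = p.2.1 + k), g p := by
          refine Finset.sum_le_sum ?_
          intro p hp
          have hk : k ≤ p.1 + p.2.2 := by
            have := (Finset.mem_filter.1 hp).2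
            omega
          have hexp : Real.exp (c * k) ≤ Real.exp (c * p.1) * Real.exp (c * p.2.2) := by
            rw [← Real.exp_add]
            refine Real.exp_le_exp.2 ?_
            have : (k : ℝ) ≤ (p.1 : ℝ) + (p.2.2 : ℝ) := by exact_mod_cast hk
            nlinarith
          have h1 : (0:ℝ) ≤ ‖v p.1‖ * ‖v p.2.1‖ * ‖v p.2.2‖ := by positivity
          calc Real.exp (c * k) * (‖v p.1‖ * ‖v p.2.1‖ * ‖v p.2.2‖)
              ≤ (Real.exp (c * p.1) * Real.exp (c * p.2.2)) *
                  (‖v p.1‖ * ‖v p.2.1‖ * ‖v p.2.2‖) :=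
                mul_le_mul_of_nonneg_right hexp h1
            _ = g p := by rw [hg]; ring
  have step2 : ∑ k ∈ A, ∑ p ∈ box.filter (fun p => p.1 + p.2.2 = p.2.1 + k), g p
      ≤ ∑ p ∈ box, g p := by
    have h1 : ∀ k, ∑ p ∈ box.filter (fun p => p.1 + p.2.2 = p.2.1 + k), g p
        = ∑ p ∈ box, if p.1 + p.2.2 = p.2.1 + k then g p else 0 := fun k =>
      Finset.sum_filter _ _
    simp only [h1]
    rw [Finset.sum_comm]
    refine Finset.sum_le_sum ?_
    intro p _
    calc ∑ k ∈ A, (if p.1 + p.2.2 = p.2.1 + k then g p else 0)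
        ≤ ∑ k ∈ A, (if k = p.1 + p.2.2 - p.2.1 then g p else 0) := by
          refine Finset.sum_le_sum ?_
          intro k _
          by_cases h : p.1 + p.2.2 = p.2.1 + k
          · have h2 : k = p.1 + p.2.2 - p.2.1 := by omega
            rw [if_pos h, if_pos h2]
          · simp only [h, if_false]
            split <;> [exact hgnonneg p; exact le_rfl]
      _ ≤ g p := by
          rw [Finset.sum_ite_eq' A (p.1 + p.2.2 - p.2.1) (fun _ => g p)]
          split <;> [exact le_rfl; exact hgnonneg p]
  have step3 : ∑ p ∈ box, g p
      = (∑ n ∈ A, Real.exp (c * n) * ‖v n‖) * (∑ j ∈ A, ‖v j‖) *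
        (∑ m ∈ A, Real.exp (c * m) * ‖v m‖) := by
    rw [hbox, Finset.sum_product]
    simp only [Finset.sum_product, hg]
    simp only [← Finset.sum_mul, ← Finset.mul_sum]
  calc ∑ k ∈ A, Real.exp (c * k) * ‖galerkinCubic N u x k‖
      ≤ ∑ k ∈ A, ∑ p ∈ box.filter (fun p => p.1 + p.2.2 = p.2.1 + k), g p :=
        Finset.sum_le_sum step1
    _ ≤ ∑ p ∈ box, g p := step2
    _ = _ := step3

/-- Gevrey bound for Galerkin approximations: with
`∑_{k≤N} |u(t,k)| ≤ C₁` on `[0,T]`, `G₀ = ∑_{k≤N} e^{σk}|u(0,k)|`,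
`C₀ = max{G₀, ((1+√5)/2) e C₁}` and `λ = 4 C₀ C₁`, one has
`∑_{k≤N} e^{σ e^{-λt} k}|u(t,k)| ≤ C₀` on `[0,T]`. -/
theorem galerkin_gevrey_bound (N : ℕ) (σ T C₁ : ℝ) (hσ : 0 < σ) (hT : 0 < T)
    (hC₁ : 0 < C₁) (u : ℝ → ℕ → ℂ) (hu : IsGalerkinSolution N u)
    (hW : ∀ t ∈ Set.Icc (0 : ℝ) T, ∑ k ∈ Finset.range (N + 1), ‖u t k‖ ≤ C₁)
    (G₀ C₀ lam : ℝ)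
    (hG₀ : G₀ = ∑ k ∈ Finset.range (N + 1), Real.exp (σ * k) * ‖u 0 k‖)
    (hC₀ : C₀ = max G₀ ((1 + Real.sqrt 5) / 2 * Real.exp 1 * C₁))
    (hlam : lam = 4 * C₀ * C₁) :
    ∀ t ∈ Set.Icc (0 : ℝ) T,
      ∑ k ∈ Finset.range (N + 1), Real.exp (σ * Real.exp (-lam * t) * k) * ‖u t k‖ ≤ C₀ := by
  obtain ⟨hzero, hderiv⟩ := hu
  -- numeric facts
  have hsqrt5 : (5:ℝ)/3 < Real.sqrt 5 := by
    have : ((5:ℝ)/3)^2 < 5 := by norm_num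
    exact (Real.lt_sqrt (by norm_num)).2 this
  have he : (0:ℝ) < Real.exp 1 := Real.exp_pos 1
  have hC₀ge : (1 + Real.sqrt 5) / 2 * Real.exp 1 * C₁ ≤ C₀ := hC₀ ▸ le_max_right _ _
  have hC₀pos : 0 < C₀ := by
    have h0 : 0 < (1 + Real.sqrt 5) / 2 * Real.exp 1 * C₁ := by
      have := Real.sqrt_nonneg 5
      positivity
    linarith
  have hlampos : 0 < lam := by rw [hlam]; positivity
  -- the weight and its derivative
  have hw : ∀ (k : ℕ) (x : ℝ), HasDerivAt (fun t => Real.exp (σ * Real.exp (-lam * t) * k))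
      (Real.exp (σ * Real.exp (-lam * x) * k) * (σ * (Real.exp (-lam * x) * -lam) * k)) x := by
    intro k x
    have h1 : HasDerivAt (fun t : ℝ => -lam * t) (-lam) x := by
      simpa using (hasDerivAt_id x).const_mul (-lam)
    exact ((h1.exp.const_mul σ).mul_const (k : ℝ)).exp
  have hwcont : ∀ k : ℕ, Continuous (fun t => Real.exp (σ * Real.exp (-lam * t) * k)) := by
    intro k
    fun_prop
  have hucont : ∀ k ≤ N, Continuous (fun t => u t k) := fun k hk =>
    continuous_iff_continuousAt.2 fun t => (hderiv t k hk).continuousAt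
  -- main function and its "derivative" bound
  set f : ℝ → ℝ := fun t => ∑ k ∈ Finset.range (N + 1),
      Real.exp (σ * Real.exp (-lam * t) * k) * ‖u t k‖ with hf
  set F : ℝ → ℝ := fun t => ∑ k ∈ Finset.range (N + 1),
      (Real.exp (σ * Real.exp (-lam * t) * k) * ‖galerkinCubic N u t k‖ +
        Real.exp (σ * Real.exp (-lam * t) * k) * (σ * (Real.exp (-lam * t) * -lam) * k) *
          ‖u t k‖) with hF
  have hcontf : ContinuousOn f (Set.Icc 0 T) := by
    refine Continuous.continuousOn ?_
    refine continuous_finset_sum _ ?_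
    intro k hk
    exact (hwcont k).mul (hucont k (Nat.lt_succ_iff.1 (Finset.mem_range.1 hk))).norm
  have ha : f 0 ≤ C₀ := by
    have h0 : f 0 = G₀ := by
      rw [hG₀, hf]
      simp
    rw [h0, hC₀]
    exact le_max_left _ _
  have hB : ∀ x : ℝ, HasDerivAt (fun _ : ℝ => C₀) ((fun _ : ℝ => (0:ℝ)) x) x := fun x =>
    hasDerivAt_const x C₀
  have hf' : ∀ x ∈ Set.Ico (0:ℝ) T, ∀ r, F x < r →
      ∃ᶠ z in nhdsWithin x (Set.Ioi x), slope f x z < r := by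
    intro x hx r hr
    set h : ℝ → ℝ := fun z => ∑ k ∈ Finset.range (N + 1),
        (Real.exp (σ * Real.exp (-lam * z) * k) * ‖slope (fun s => u s k) x z‖ +
          slope (fun s => Real.exp (σ * Real.exp (-lam * s) * k)) x z * ‖u x k‖) with hh
    have hten : Filter.Tendsto h (nhdsWithin x (Set.Ioi x)) (nhds (F x)) := by
      rw [hF]
      refine tendsto_finset_sum _ ?_
      intro k hk
      have hk' : k ≤ N := Nat.lt_succ_iff.1 (Finset.mem_range.1 hk)
      have hmono : nhdsWithin x (Set.Ioi x) ≤ nhdsWithin x ({x}ᶜ) :=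
        nhdsWithin_mono x (fun z hz => Set.mem_compl_singleton_iff.2 (ne_of_gt hz))
      have t1 : Filter.Tendsto (fun z => Real.exp (σ * Real.exp (-lam * z) * k))
          (nhdsWithin x (Set.Ioi x)) (nhds (Real.exp (σ * Real.exp (-lam * x) * k))) :=
        ((hwcont k).tendsto x).mono_left nhdsWithin_le_nhds
      have t2 : Filter.Tendsto (fun z => ‖slope (fun s => u s k) x z‖)
          (nhdsWithin x (Set.Ioi x)) (nhds ‖galerkinCubic N u x k‖) := by
        have := ((hasDerivAt_iff_tendsto_slope.1 (hderiv x k hk')).norm).mono_left hmono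
        simpa using this
      have t3 : Filter.Tendsto (fun z => slope (fun s => Real.exp (σ * Real.exp (-lam * s) * k)) x z)
          (nhdsWithin x (Set.Ioi x))
          (nhds (Real.exp (σ * Real.exp (-lam * x) * k) * (σ * (Real.exp (-lam * x) * -lam) * k))) :=
        (hasDerivAt_iff_tendsto_slope.1 (hw k x)).mono_left hmono
      exact (t1.mul t2).add (t3.mul tendsto_const_nhds)
    have hslope : ∀ᶠ z in nhdsWithin x (Set.Ioi x), slope f x z ≤ h z := by
      filter_upwards [self_mem_nhdsWithin] with z hz
      have hzx : 0 < z - x := sub_pos.2 hz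
      rw [slope_def_field, hf, hh]
      rw [← Finset.sum_sub_distrib, Finset.sum_div]
      refine Finset.sum_le_sum ?_
      intro k hk
      set Wz := Real.exp (σ * Real.exp (-lam * z) * k) with hWz
      set Wx := Real.exp (σ * Real.exp (-lam * x) * k) with hWx
      have e1 : ‖slope (fun s => u s k) x z‖ = ‖u z k - u x k‖ / (z - x) := by
        rw [slope_def_module, norm_smul, norm_inv, Real.norm_eq_abs, abs_of_pos hzx,
          inv_mul_eq_div]
      have e2 : slope (fun s => Real.exp (σ * Real.exp (-lam * s) * k)) x z
          = (Wz - Wx) / (z - x) := by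
        rw [slope_def_field]
      rw [e1, e2]
      have hd : ‖u z k‖ - ‖u x k‖ ≤ ‖u z k - u x k‖ := norm_sub_norm_le _ _
      have hWzpos : (0:ℝ) < Wz := Real.exp_pos _
      have key : Wz * ‖u z k‖ - Wx * ‖u x k‖
          ≤ Wz * ‖u z k - u x k‖ + (Wz - Wx) * ‖u x k‖ := by
        have h5 : Wz * (‖u z k‖ - ‖u x k‖) ≤ Wz * ‖u z k - u x k‖ :=
          mul_le_mul_of_nonneg_left hd hWzpos.le
        nlinarith
      have hre : Wz * (‖u z k - u x k‖ / (z - x)) + (Wz - Wx) / (z - x) * ‖u x k‖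
          = (Wz * ‖u z k - u x k‖ + (Wz - Wx) * ‖u x k‖) / (z - x) := by
        field_simp
      rw [hre]
      exact (div_le_div_iff_of_pos_right hzx).2 key
    have := (hten.eventually_lt_const hr).and hslope
    refine this.frequently.mono ?_
    rintro z ⟨h1, h2⟩
    exact lt_of_le_of_lt h2 h1
  have bound : ∀ x ∈ Set.Ico (0:ℝ) T, f x = C₀ → F x < 0 := by
    intro x hx hfx
    have hxIcc : x ∈ Set.Icc (0:ℝ) T := Set.Ico_subset_Icc_self hx
    have hWx := hW x hxIcc
    have hWx0 : (0:ℝ) ≤ ∑ j ∈ Finset.range (N + 1), ‖u x j‖ :=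
      Finset.sum_nonneg fun j _ => norm_nonneg _
    set c : ℝ := σ * Real.exp (-lam * x) with hc
    have hcpos : 0 < c := by positivity
    have hfnn : 0 ≤ f x := by
      rw [hf]
      exact Finset.sum_nonneg fun k _ => by positivity
    -- split F x
    have hFsplit : F x = (∑ k ∈ Finset.range (N + 1), Real.exp (c * k) * ‖galerkinCubic N u x k‖)
        - lam * ∑ k ∈ Finset.range (N + 1), c * k * Real.exp (c * k) * ‖u x k‖ := by
      rw [hF, Finset.mul_sum, ← Finset.sum_sub_distrib]
      refine Finset.sum_congr rfl ?_
      intro k _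
      rw [hc]
      ring_nf
    -- cubic bound
    have hcube := my_cubic_bound N hcpos.le u x
    have hS1 : ∑ k ∈ Finset.range (N + 1), Real.exp (c * k) * ‖galerkinCubic N u x k‖
        ≤ C₁ * C₀ ^ 2 := by
      have hfx' : (∑ n ∈ Finset.range (N + 1), Real.exp (c * n) * ‖u x n‖) = C₀ := by
        rw [← hfx, hf]
      rw [hfx'] at hcube
      calc ∑ k ∈ Finset.range (N + 1), Real.exp (c * k) * ‖galerkinCubic N u x k‖
          ≤ C₀ * (∑ j ∈ Finset.range (N + 1), ‖u x j‖) * C₀ := hcube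
        _ ≤ C₁ * C₀ ^ 2 := by nlinarith
    -- lower bound on dissipation
    have hS2 : C₀ - Real.exp 1 * C₁
        ≤ ∑ k ∈ Finset.range (N + 1), c * k * Real.exp (c * k) * ‖u x k‖ := by
      have hstep : f x ≤ Real.exp 1 * (∑ k ∈ Finset.range (N + 1), ‖u x k‖)
          + ∑ k ∈ Finset.range (N + 1), c * k * Real.exp (c * k) * ‖u x k‖ := by
        rw [hf, Finset.mul_sum, ← Finset.sum_add_distrib]
        refine Finset.sum_le_sum ?_
        intro k _
        have h6 : Real.exp (c * k) ≤ Real.exp 1 + c * k * Real.exp (c * k) :=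
          my_exp_le _ (by positivity)
        have h7 : (0:ℝ) ≤ ‖u x k‖ := norm_nonneg _
        nlinarith
      have h8 : Real.exp 1 * (∑ k ∈ Finset.range (N + 1), ‖u x k‖) ≤ Real.exp 1 * C₁ :=
        mul_le_mul_of_nonneg_left hWx he.le
      rw [hfx] at hstep
      linarith
    rw [hFsplit]
    have h9 : lam * (C₀ - Real.exp 1 * C₁)
        ≤ lam * ∑ k ∈ Finset.range (N + 1), c * k * Real.exp (c * k) * ‖u x k‖ :=
      mul_le_mul_of_nonneg_left hS2 hlampos.le
    have h11 : 4 * (Real.exp 1 * C₁) < 3 * C₀ := by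
      have h2 : (4:ℝ)/3 < (1 + Real.sqrt 5) / 2 := by linarith
      have h3 := mul_lt_mul_of_pos_right h2 (mul_pos he hC₁)
      have h4 : (1 + Real.sqrt 5) / 2 * (Real.exp 1 * C₁) = (1 + Real.sqrt 5) / 2 * Real.exp 1 * C₁ := by
        ring
      linarith
    have hfinal : C₁ * C₀ ^ 2 - lam * (C₀ - Real.exp 1 * C₁) < 0 := by
      rw [hlam]
      have h12 : C₁ * C₀ ^ 2 - 4 * C₀ * C₁ * (C₀ - Real.exp 1 * C₁)
          = C₀ * C₁ * (4 * (Real.exp 1 * C₁) - 3 * C₀) := by ring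
      rw [h12]
      exact mul_neg_of_pos_of_neg (mul_pos hC₀pos hC₁) (by linarith)
    linarith
  intro t ht
  exact image_le_of_liminf_slope_right_lt_deriv_boundary hcontf hf' ha hB bound ht
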